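/- Let (X, d) be a metric space and S : ℝ≥0 → X → X a semigroup: S(0) = id and S(t + s) = S(t) ∘ S(s) for all t, s ≥ 0. Assume: (i) for each t ≥ 0, S(t) : X → X is continuous; (ii) there exists t₀ > 0 such that for every bounded set B ⊆ X, the image S(t₀)(B) has compact closure; (iii) there are sets B₀ ⊆ U ⊆ X with B₀ bounded and nonempty, U open, and B₀ absorbing in U: for every bounded B ⊆ U there exists T(B) > 0 with S(t)(B) ⊆ B₀ for all t > T(B). Define A = ω(B₀) = ⋂_{s ≥ 0} closure(⋃_{t ≥ s} S(t)(B₀)). Then A is the minimal closed set attracting B₀: for every closed set F ⊆ X such that sup_{x ∈ B₀} dist(S(t)(x), F) → 0 as t → ∞, one has A ⊆ F. -/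

import Mathlib

open Set

/-- The ω-limit set of a set `B` under a semigroup `S` of (time-indexed) maps:
`ω(B) = ⋂_{s ≥ 0} closure (⋃_{t ≥ s} S t '' B)`. -/
def omegaLimitSet {X : Type*} [TopologicalSpace X] (S : ℝ → X → X) (B : Set X) : Set X :=
  ⋂ s ∈ Set.Ici (0 : ℝ), closure (⋃ t ∈ Set.Ici s, S t '' B)

/-- Minimality part of the abstract global attractor theorem (Temam): the ω-limit set
`A = ω(B₀)` of the absorbing set is contained in every closed set `F` which attracts `B₀`,
i.e. such that `sup_{x ∈ B₀} dist (S t x) F → 0` as `t → ∞` (here expressed via the extended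
distance `infEdist`, so that the empty set does not attract). -/
theorem global_attractor_minimal {X : Type*} [MetricSpace X]
    (S : ℝ → X → X)
    (hS0 : S 0 = id)
    (hSadd : ∀ t s : ℝ, 0 ≤ t → 0 ≤ s → S (t + s) = S t ∘ S s)
    (hcont : ∀ t : ℝ, 0 ≤ t → Continuous (S t))
    (hcpt : ∃ t₀ : ℝ, 0 < t₀ ∧
      ∀ B : Set X, Bornology.IsBounded B → IsCompact (closure (S t₀ '' B)))
    (B₀ U : Set X) (hB₀U : B₀ ⊆ U) (hUopen : IsOpen U)
    (hB₀bdd : Bornology.IsBounded B₀) (hB₀ne : B₀.Nonempty)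
    (habs : ∀ B : Set X, B ⊆ U → Bornology.IsBounded B →
      ∃ T : ℝ, 0 < T ∧ ∀ t : ℝ, T < t → S t '' B ⊆ B₀) :
    ∀ F : Set X, IsClosed F →
      (∀ ε > (0 : ℝ), ∃ T : ℝ, ∀ t ≥ T, ∀ x ∈ B₀,
        EMetric.infEdist (S t x) F ≤ ENNReal.ofReal ε) →
      omegaLimitSet S B₀ ⊆ F := by
  intro F hF hattr y hy
  have key : ∀ ε : ℝ, 0 < ε → EMetric.infEdist y F ≤ ENNReal.ofReal ε := by
    intro ε hε
    obtain ⟨T, hT⟩ := hattr ε hε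
    have hy' : y ∈ closure (⋃ t ∈ Set.Ici (max 0 T), S t '' B₀) :=
      Set.mem_iInter₂.1 hy (max 0 T) (le_max_left 0 T)
    have hclosed : IsClosed {z : X | EMetric.infEdist z F ≤ ENNReal.ofReal ε} :=
      isClosed_le EMetric.continuous_infEdist continuous_const
    have hsub : (⋃ t ∈ Set.Ici (max 0 T), S t '' B₀) ⊆
        {z : X | EMetric.infEdist z F ≤ ENNReal.ofReal ε} := by
      rintro z hz
      simp only [Set.mem_iUnion, Set.mem_Ici] at hz
      obtain ⟨t, ht, x, hx, rfl⟩ := hz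
      exact hT t (le_trans (le_max_right 0 T) ht) x hx
    exact closure_minimal hsub hclosed hy'
  have h0 : EMetric.infEdist y F = 0 := by
    refine le_antisymm ?_ zero_le
    refine ENNReal.le_of_forall_pos_le_add fun ε hε _ => ?_
    simpa [ENNReal.ofReal_coe_nnreal] using key ε (by exact_mod_cast hε)
  exact (EMetric.mem_iff_infEdist_zero_of_closed hF).2 h0
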